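/- Let Φ be the minimal dilation of φ and equip D with the topology of pointwise convergence. If (s_α) is a net in S such that φ(t s_α u) f → φ(t s u) f in E for all t, u ∈ S and f ∈ F, then Φ(s_α) w → Φ(s) w for every w ∈ D. -/

import Mathlib

/-- The linear span `D = span{φ_{s,f}} ⊆ E^S`, where `φ_{s,f}(t) = φ(ts) f`. -/
def dilSpan (K : Type*) {S E F : Type*} [Field K] [Monoid S]
    [AddCommGroup E] [Module K E] [AddCommGroup F] [Module K F]
    (φ : S → (F →ₗ[K] E)) : Submodule K (S → E) :=
  Submodule.span K {w : S → E | ∃ s f, w = fun t => φ (t * s) f}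

theorem dilSpan_gen_mem {K : Type*} {S E F : Type*} [Field K] [Monoid S]
    [AddCommGroup E] [Module K E] [AddCommGroup F] [Module K F]
    (φ : S → (F →ₗ[K] E)) (s : S) (f : F) :
    (fun t => φ (t * s) f) ∈ dilSpan K φ :=
  Submodule.subset_span ⟨s, f, rfl⟩

/-- Continuity of the minimal dilation along nets: if `φ(t s_α u) f → φ(t s u) f` for all
`t, u ∈ S`, `f ∈ F`, then `Φ(s_α) w → Φ(s) w` for every `w ∈ D` in the Tikhonov topology. -/
theorem dilation_net_convergence {K S E F ι : Type*} [Field K] [Monoid S]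
    [AddCommGroup E] [Module K E] [TopologicalSpace E]
    [ContinuousAdd E] [ContinuousConstSMul K E]
    [AddCommGroup F] [Module K F]
    (φ : S → (F →ₗ[K] E))
    (Φ : S → (dilSpan K φ →ₗ[K] dilSpan K φ))
    (hΦ : ∀ (u s : S) (f : F),
      Φ u ⟨fun t => φ (t * s) f, dilSpan_gen_mem φ s f⟩ =
        ⟨fun t => φ (t * (u * s)) f, dilSpan_gen_mem φ (u * s) f⟩)
    (l : Filter ι) (sα : ι → S) (s : S)
    (hconv : ∀ (t u : S) (f : F),
      Filter.Tendsto (fun a => φ (t * sα a * u) f) l (nhds (φ (t * s * u) f))) :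
    ∀ w : dilSpan K φ,
      Filter.Tendsto (fun a => Φ (sα a) w) l (nhds (Φ s w)) := by
  -- reduce to pointwise convergence of coercions
  have key : ∀ w : dilSpan K φ, ∀ t : S,
      Filter.Tendsto (fun a => ((Φ (sα a) w : S → E)) t) l (nhds ((Φ s w : S → E) t)) := by
    intro w
    obtain ⟨w, hw⟩ := w
    refine Submodule.span_induction (p := fun w hw => ∀ t : S,
      Filter.Tendsto (fun a => ((Φ (sα a) ⟨w, hw⟩ : S → E)) t) l
        (nhds ((Φ s ⟨w, hw⟩ : S → E) t))) ?_ ?_ ?_ ?_ hw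
    · rintro w ⟨s', f, rfl⟩ t
      have h1 : ∀ u h, ((Φ u ⟨fun t => φ (t * s') f, h⟩ : dilSpan K φ) : S → E) =
          fun t => φ (t * (u * s')) f := by
        intro u h
        rw [show (⟨fun t => φ (t * s') f, h⟩ : dilSpan K φ) =
          ⟨fun t => φ (t * s') f, dilSpan_gen_mem φ s' f⟩ from rfl, hΦ u s' f]
      show Filter.Tendsto (fun a => ((Φ (sα a) ⟨fun t => φ (t * s') f, dilSpan_gen_mem φ s' f⟩ : dilSpan K φ) : S → E) t) l
        (nhds (((Φ s ⟨fun t => φ (t * s') f, dilSpan_gen_mem φ s' f⟩ : dilSpan K φ) : S → E) t))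
      simp only [h1]
      simpa only [mul_assoc] using hconv t s' f
    · intro t
      have : (⟨(0 : S → E), (dilSpan K φ).zero_mem⟩ : dilSpan K φ) = 0 := rfl
      simp only [this, map_zero]
      simpa using tendsto_const_nhds
    · intro x y hx hy ihx ihy t
      have : (⟨x + y, Submodule.add_mem _ hx hy⟩ : dilSpan K φ) = ⟨x, hx⟩ + ⟨y, hy⟩ := rfl
      simp only [this, map_add]
      exact (ihx t).add (ihy t)
    · intro c x hx ih t
      have : (⟨c • x, Submodule.smul_mem _ c hx⟩ : dilSpan K φ) = c • ⟨x, hx⟩ := rfl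
      simp only [this, map_smul]
      exact (ih t).const_smul c
  intro w
  rw [tendsto_subtype_rng, tendsto_pi_nhds]
  exact key w
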